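/- (Urysohn) If X is a linearly ordered set of cardinality greater than 2^{ℵ_α}, then X contains a subset of order type ω_{α+1} or a subset of reverse order type ω_{α+1}. -/

import Mathlib

open Cardinal Set Ordinal
open scoped Classical
set_option linter.unusedSectionVars false

universe u

namespace UrysohnAux

variable {L : Type u} [LinearOrder L] [WellFoundedLT L]

/-- `x` is a valid candidate at stage `ξ` for the sequence of `a`. -/
def Good (c : L → L → Bool) (a : L) (s : Ordinal.{u} → Option L) (ξ : Ordinal.{u}) (x : L) :
    Prop :=
  ∀ η, η < ξ → ∀ z, s η = some z → x ≠ z ∧ c z x = c z a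

theorem good_congr {c : L → L → Bool} {a : L} {s t : Ordinal.{u} → Option L} {ξ : Ordinal.{u}}
    (h : ∀ η, η < ξ → s η = t η) : Good c a s ξ = Good c a t ξ := by
  funext x
  exact propext ⟨fun H η hη z hz => H η hη z ((h η hη) ▸ hz),
    fun H η hη z hz => H η hη z ((h η hη) ▸ hz)⟩

noncomputable def seqF (c : L → L → Bool) (a : L) (ξ : Ordinal.{u})
    (ih : ∀ η, η < ξ → Option L) : Option L :=
  if h : {x | Good c a (fun η => if hη : η < ξ then ih η hη else none) ξ x}.Nonempty
  then some (WellFounded.min (IsWellFounded.wf (r := ((· < ·) : L → L → Prop))) _ h)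
  else none

noncomputable def seq (c : L → L → Bool) (a : L) : Ordinal.{u} → Option L :=
  Ordinal.lt_wf.fix (seqF c a)

theorem seq_eq (c : L → L → Bool) (a : L) (ξ : Ordinal.{u}) :
    seq c a ξ = if h : {x | Good c a (seq c a) ξ x}.Nonempty
      then some (WellFounded.min (IsWellFounded.wf (r := ((· < ·) : L → L → Prop))) _ h)
      else none := by
  have : seq c a ξ = seqF c a ξ (fun η _ => seq c a η) :=
    WellFounded.fix_eq _ _ _
  rw [this, seqF]
  have hs : ∀ η, η < ξ → (fun η => if hη : η < ξ then seq c a η else none) η = seq c a η := by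
    intro η hη
    simp only [dif_pos hη]
  have hset : {x | Good c a (fun η => if hη : η < ξ then seq c a η else none) ξ x}
      = {x | Good c a (seq c a) ξ x} := by
    rw [good_congr hs]
  simp only [hset]

end UrysohnAux

namespace UrysohnAux

variable {L : Type u} [LinearOrder L] [WellFoundedLT L]

/-- `typein` with the well-order instance given explicitly. -/
noncomputable def tyin {β : Type u} [LinearOrder β] [WellFoundedLT β] (d : β) : Ordinal.{u} :=
  @Ordinal.typein β (· < ·) isWellOrder_lt d

theorem tyin_inj {β : Type u} [LinearOrder β] [WellFoundedLT β] :
    Function.Injective (tyin (β := β)) :=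
  fun _ _ h => @Ordinal.typein_injective β (· < ·) isWellOrder_lt _ _ h

theorem tyin_lt_toType {o : Ordinal.{u}} (d : o.ToType) : tyin d < o := by
  have := @Ordinal.typein_lt_type o.ToType (· < ·) isWellOrder_lt d
  rwa [Ordinal.type_toType] at this

theorem tyin_enum (o : Ordinal.{u}) (v : Ordinal.{u}) (hv : v < o) :
    tyin ((Ordinal.ToType.mk (o := o)) ⟨v, hv⟩) = v := by
  have := (Ordinal.ToType.mk (o := o)).symm_apply_apply ⟨v, hv⟩
  exact congrArg Subtype.val this

theorem tyin_strictMono {β : Type u} [LinearOrder β] [WellFoundedLT β] :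
    StrictMono (tyin (β := β)) := by
  intro x y h
  exact (@Ordinal.typein_lt_typein β (· < ·) isWellOrder_lt x y).mpr h

theorem seq_good {c : L → L → Bool} {a : L} {ξ : Ordinal.{u}} {x : L}
    (h : seq c a ξ = some x) : Good c a (seq c a) ξ x := by
  rw [seq_eq] at h
  split_ifs at h with hne
  exact (Option.some.inj h) ▸ WellFounded.min_mem _ _ hne

theorem seq_nonempty {c : L → L → Bool} {a : L} {ξ : Ordinal.{u}}
    (hne : {x | Good c a (seq c a) ξ x}.Nonempty) : (seq c a ξ).isSome := by
  rw [seq_eq, dif_pos hne]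
  rfl

theorem seq_ne {c : L → L → Bool} {a : L} {η ξ : Ordinal.{u}} {z x : L} (hlt : η < ξ)
    (hz : seq c a η = some z) (hx : seq c a ξ = some x) : x ≠ z ∧ c z x = c z a :=
  seq_good hx η hlt z hz

theorem exists_none (c : L → L → Bool) (a : L) : ∃ ξ : Ordinal.{u}, seq c a ξ = none := by
  by_contra h
  push_neg at h
  have hsome : ∀ d : (Order.succ (#L)).ord.ToType,
      (seq c a (tyin d)).isSome := fun d =>
    Option.ne_none_iff_isSome.mp (h _)
  set f : (Order.succ (#L)).ord.ToType → L :=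
    fun d => (seq c a (tyin d)).get (hsome d) with hf
  have hval : ∀ d, seq c a (tyin d) = some (f d) :=
    fun d => Option.eq_some_of_isSome (hsome d)
  have hinj : Function.Injective f := by
    intro d d' hdd
    by_contra hne
    have htne : tyin d ≠ tyin d' := fun hc => hne (tyin_inj hc)
    rcases htne.lt_or_gt with hlt | hlt
    · exact (seq_ne hlt (hval d) (hval d')).1 hdd.symm
    · exact (seq_ne hlt (hval d') (hval d)).1 hdd
  have hcard : #(Order.succ (#L)).ord.ToType ≤ #L := Cardinal.mk_le_of_injective hinj
  rw [Cardinal.mk_toType, Cardinal.card_ord] at hcard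
  exact absurd hcard (not_le.mpr (Order.lt_succ _))

noncomputable def gamma (c : L → L → Bool) (a : L) : Ordinal.{u} :=
  sInf {ξ : Ordinal.{u} | seq c a ξ = none}

theorem gamma_none (c : L → L → Bool) (a : L) : seq c a (gamma c a) = none :=
  csInf_mem (exists_none c a)

theorem gamma_le {c : L → L → Bool} {a : L} {ξ : Ordinal.{u}} (h : seq c a ξ = none) :
    gamma c a ≤ ξ :=
  csInf_le' (show ξ ∈ {ξ : Ordinal.{u} | seq c a ξ = none} from h)

theorem isSome_of_lt_gamma {c : L → L → Bool} {a : L} {ξ : Ordinal.{u}}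
    (h : ξ < gamma c a) : (seq c a ξ).isSome := by
  by_contra hn
  exact absurd (gamma_le (Option.not_isSome_iff_eq_none.mp hn)) (not_le.mpr h)

theorem self_mem_seq (c : L → L → Bool) (a : L) :
    ∃ η, η < gamma c a ∧ seq c a η = some a := by
  by_contra h
  push_neg at h
  have hgood : Good c a (seq c a) (gamma c a) a := by
    intro η hη z hz
    exact ⟨fun hc => h η hη (hc ▸ hz), rfl⟩
  have := seq_nonempty ⟨a, hgood⟩
  rw [gamma_none] at this
  simp at this

theorem seq_eq_seq {c : L → L → Bool} {a b : L} {δ : Ordinal.{u}}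
    (hcol : ∀ ξ, ξ < δ → ∀ z w, seq c a ξ = some z → seq c b ξ = some w → c z a = c w b) :
    ∀ ξ, ξ < δ → seq c a ξ = seq c b ξ := by
  intro ξ
  induction ξ using Ordinal.induction with
  | h ξ IH =>
    intro hξ
    have hset : {x | Good c a (seq c a) ξ x} = {x | Good c b (seq c b) ξ x} := by
      ext x
      constructor
      · intro H η hη z hz
        have hηδ : η < δ := hη.trans hξ
        have hab : seq c a η = seq c b η := IH η hη hηδ
        obtain ⟨h1, h2⟩ := H η hη z (hab ▸ hz)
        exact ⟨h1, h2.trans (hcol η hηδ z z (hab ▸ hz) hz)⟩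
      · intro H η hη z hz
        have hηδ : η < δ := hη.trans hξ
        have hab : seq c a η = seq c b η := IH η hη hηδ
        obtain ⟨h1, h2⟩ := H η hη z (hab.symm ▸ hz)
        exact ⟨h1, h2.trans (hcol η hηδ z z hz (hab.symm ▸ hz)).symm⟩
    rw [seq_eq (c := c) (a := a), seq_eq (c := c) (a := b)]
    simp only [hset]

end UrysohnAux

namespace UrysohnAux

variable {L : Type u} [LinearOrder L] [WellFoundedLT L]

theorem card_gamma_le (c : L → L → Bool) {κ : Cardinal.{u}} (hκ : ℵ₀ ≤ κ)
    {δ : Ordinal.{u}} (hδκ : δ.card ≤ κ) :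
    #{a : L | gamma c a = δ} ≤ 2 ^ κ := by
  classical
  have h2 : (ℵ₀ : Cardinal.{u}) ≤ 2 ^ κ := hκ.trans (Cardinal.cantor κ).le
  choose! eta heta1 heta2 using fun a : L => self_mem_seq c a
  set Φ : {a : L | gamma c a = δ} → (δ.ToType → Bool) × δ.ToType := fun a =>
    (fun y => ((seq c (a : L) (tyin y)).map (fun z => c z (a : L))).getD true,
     (Ordinal.ToType.mk (o := δ)) ⟨eta (a : L), lt_of_lt_of_le (heta1 (a : L)) (le_of_eq a.2)⟩) with hΦdef
  have hΦ : Function.Injective Φ := by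
    rintro ⟨x, hx⟩ ⟨y, hy⟩ h
    rw [hΦdef, Prod.mk.injEq] at h
    obtain ⟨h1, h2'⟩ := h
    have hcol : ∀ ξ, ξ < δ → ∀ z w, seq c x ξ = some z → seq c y ξ = some w →
        c z x = c w y := by
      intro ξ hξ z w hz hw
      have hfun := congrFun h1 ((Ordinal.ToType.mk (o := δ)) ⟨ξ, hξ⟩)
      simp only [tyin_enum, hz, hw, Option.map_some, Option.getD_some] at hfun
      exact hfun
    have hseq := seq_eq_seq (c := c) (a := x) (b := y) (δ := δ) hcol
    have hpos : eta x = eta y := by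
      have := (Ordinal.ToType.mk (o := δ)).injective h2'
      exact congrArg Subtype.val this
    have hlt : eta x < δ := hx ▸ heta1 x
    have : some x = some y := by
      rw [← heta2 x, hseq (eta x) hlt, hpos, heta2 y]
    exact Subtype.ext (Option.some.inj this)
  have hcard := Cardinal.mk_le_of_injective hΦ
  have hT : #((δ.ToType → Bool) × δ.ToType) ≤ 2 ^ κ := by
    have e1 : #(δ.ToType → Bool) = 2 ^ δ.card := by
      simp [Cardinal.mk_arrow, Cardinal.mk_toType]
    have e2 : #((δ.ToType → Bool) × δ.ToType) = 2 ^ δ.card * δ.card := by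
      rw [Cardinal.mk_prod, Cardinal.lift_id, Cardinal.lift_id, e1, Cardinal.mk_toType]
    rw [e2]
    calc 2 ^ δ.card * δ.card ≤ 2 ^ κ * 2 ^ κ :=
          mul_le_mul' (Cardinal.power_le_power_left two_ne_zero hδκ)
            (hδκ.trans (Cardinal.cantor κ).le)
      _ = 2 ^ κ := Cardinal.mul_eq_self h2
  exact hcard.trans hT

theorem exists_long (c : L → L → Bool) {κ : Cardinal.{u}} (hκ : ℵ₀ ≤ κ)
    (hL : 2 ^ κ < #L) :
    ∃ a : L, ∀ ξ, ξ < (Order.succ κ).ord → (seq c a ξ).isSome := by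
  by_contra hcon
  push_neg at hcon
  have hgam : ∀ a : L, gamma c a < (Order.succ κ).ord := by
    intro a
    obtain ⟨ξ, hξ, hn⟩ := hcon a
    exact lt_of_le_of_lt (gamma_le (Option.not_isSome_iff_eq_none.mp hn)) hξ
  have h2 : (ℵ₀ : Cardinal.{u}) ≤ 2 ^ κ := hκ.trans (Cardinal.cantor κ).le
  have hcover : (Set.univ : Set L) =
      ⋃ d : (Order.succ κ).ord.ToType, {a : L | gamma c a = tyin d} := by
    ext a
    simp only [Set.mem_univ, Set.mem_iUnion, Set.mem_setOf_eq, true_iff]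
    exact ⟨Ordinal.ToType.mk ⟨gamma c a, hgam a⟩, (tyin_enum _ _ _).symm⟩
  have hLle : #L ≤ Order.succ κ * 2 ^ κ := by
    have := Cardinal.mk_iUnion_le (fun d : (Order.succ κ).ord.ToType =>
      {a : L | gamma c a = tyin d})
    rw [← hcover, Cardinal.mk_univ] at this
    refine this.trans (mul_le_mul' ?_ ?_)
    · rw [Cardinal.mk_toType, Cardinal.card_ord]
    · refine ciSup_le' fun d => ?_
      have hd : (tyin d).card ≤ κ := by
        have := Cardinal.lt_ord.mp (tyin_lt_toType d)
        exact Order.lt_succ_iff.mp this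
      exact card_gamma_le c hκ hd
  have hmul : Order.succ κ * 2 ^ κ ≤ 2 ^ κ := by
    calc Order.succ κ * 2 ^ κ ≤ 2 ^ κ * 2 ^ κ :=
          mul_le_mul' (Order.succ_le_of_lt (Cardinal.cantor κ)) le_rfl
      _ = 2 ^ κ := Cardinal.mul_eq_self h2
  exact absurd (hLle.trans hmul) (not_le.mpr hL)

end UrysohnAux

open UrysohnAux in
/-- Urysohn's theorem: a linear order of cardinality `> 2 ^ ℵ_α` contains a
subset of order type `ω_{α+1}` or of reverse order type `ω_{α+1}`. -/
theorem stmt8 (α : Ordinal.{u}) (X : Type u) [LinearOrder X]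
    (hX : 2 ^ Cardinal.aleph α < #X) :
    (∃ f : (Cardinal.aleph (α + 1)).ord.ToType → X, StrictMono f) ∨
    (∃ f : (Cardinal.aleph (α + 1)).ord.ToType → X, StrictAnti f) := by
  classical
  set κ : Cardinal.{u} := Cardinal.aleph α with hκdef
  have hκ : ℵ₀ ≤ κ := Cardinal.aleph0_le_aleph α
  have hsucc : Cardinal.aleph (α + 1) = Order.succ κ := by
    rw [Ordinal.add_one_eq_succ, Cardinal.aleph_succ]
  set L : Type u := (Order.succ ((2 : Cardinal.{u}) ^ κ)).ord.ToType with hLdef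
  have hmkL : #L = Order.succ ((2 : Cardinal.{u}) ^ κ) := by
    rw [hLdef, Cardinal.mk_toType, Cardinal.card_ord]
  have hLX : #L ≤ #X := by
    rw [hmkL]; exact Order.succ_le_of_lt hX
  obtain ⟨g⟩ := Cardinal.le_def _ _ |>.mp hLX
  set c : L → L → Bool := fun u v => decide ((u < v) ↔ (g u < g v)) with hc
  have key1 : ∀ u v : L, u ≠ v → (u < v ↔ g u < g v) → (v < u ↔ g v < g u) := by
    intro u v huv h
    have hg : g u ≠ g v := fun e => huv (g.injective e)
    constructor
    · intro hvu
      by_contra hng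
      have : g u < g v := lt_of_le_of_ne (not_lt.mp hng) hg
      exact absurd (h.mpr this) (asymm hvu)
    · intro hgvu
      by_contra hnvu
      have : u < v := lt_of_le_of_ne (not_lt.mp hnvu) huv
      exact absurd (h.mp this) (asymm hgvu)
  have hcsymm : ∀ u v : L, u ≠ v → c u v = c v u := by
    intro u v huv
    rw [hc]
    exact decide_eq_decide.mpr ⟨key1 u v huv, key1 v u huv.symm⟩
  have hLbig : 2 ^ κ < #L := by rw [hmkL]; exact Order.lt_succ _
  obtain ⟨a, ha⟩ := exists_long c hκ hLbig
  set O' : Ordinal.{u} := (Order.succ κ).ord with hO'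
  have hsome : ∀ y : O'.ToType, (UrysohnAux.seq c a (tyin y)).isSome := fun y =>
    ha _ (tyin_lt_toType y)
  set s : O'.ToType → L := fun y => (UrysohnAux.seq c a (tyin y)).get (hsome y) with hs
  have hsval : ∀ y, UrysohnAux.seq c a (tyin y) = some (s y) := fun y =>
    Option.eq_some_of_isSome (hsome y)
  have hhom : ∀ y y' : O'.ToType, y < y' → c (s y) (s y') = c (s y) a := by
    intro y y' h
    exact (seq_ne (tyin_strictMono h) (hsval y) (hsval y')).2
  have hsinj : Function.Injective s := by
    intro y y' h
    by_contra hne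
    have htne : tyin y ≠ tyin y' := fun hcc => hne (tyin_inj hcc)
    rcases htne.lt_or_gt with hlt | hlt
    · exact (seq_ne hlt (hsval y) (hsval y')).1 h.symm
    · exact (seq_ne hlt (hsval y') (hsval y)).1 h
  have hOcard : #O'.ToType = Order.succ κ := by
    rw [hO', Cardinal.mk_toType, Cardinal.card_ord]
  set Bt : Set O'.ToType := {y | c (s y) a = true} with hBtdef
  set Bf : Set O'.ToType := {y | c (s y) a = false} with hBfdef
  have hunion : Bt ∪ Bf = Set.univ := by
    ext y
    simp only [Set.mem_union, Set.mem_setOf_eq, Set.mem_univ, iff_true, hBtdef, hBfdef]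
    rcases Bool.eq_false_or_eq_true (c (s y) a) with h | h <;> simp [h]
  have hbig : ∃ (t : Bool) (B : Set O'.ToType),
      Order.succ κ ≤ #B ∧ ∀ y ∈ B, c (s y) a = t := by
    by_contra hcc
    push_neg at hcc
    have h1 : ¬ Order.succ κ ≤ #Bt := by
      intro h
      obtain ⟨y, hy, hne⟩ := hcc true Bt h
      exact hne hy
    have h2 : ¬ Order.succ κ ≤ #Bf := by
      intro h
      obtain ⟨y, hy, hne⟩ := hcc false Bf h
      exact hne hy
    have hle : #O'.ToType ≤ #Bt + #Bf := by
      rw [← Cardinal.mk_univ (α := O'.ToType), ← hunion]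
      exact Cardinal.mk_union_le _ _
    rw [hOcard] at hle
    have := Cardinal.add_lt_of_lt (hκ.trans (Order.le_succ κ))
      (not_le.mp h1) (not_le.mp h2)
    exact absurd (hle.trans_lt this) (lt_irrefl _)
  obtain ⟨t, B, hBcard, hBt⟩ := hbig
  set H : Set L := s '' B with hH
  have hHcard : Order.succ κ ≤ #H := by
    rw [hH, Cardinal.mk_image_eq_of_injOn _ _ hsinj.injOn]
    exact hBcard
  have clr : ∀ u v : L, u ∈ H → v ∈ H → u ≠ v → c u v = t := by
    rintro u v ⟨y, hy, rfl⟩ ⟨y', hy', rfl⟩ hne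
    have hyy : y ≠ y' := fun e => hne (by rw [e])
    rcases hyy.lt_or_gt with hlt | hlt
    · rw [hhom _ _ hlt]
      exact hBt y hy
    · rw [hcsymm _ _ hne, hhom _ _ hlt]
      exact hBt y' hy'
  have hord : @Ordinal.type (Cardinal.aleph (α + 1)).ord.ToType (· < ·) isWellOrder_lt ≤
      @Ordinal.type (↥H) (· < ·) isWellOrder_lt := by
    rw [Ordinal.type_toType, Cardinal.ord_le, Ordinal.card_type]
    rw [hsucc] at *
    exact hHcard
  obtain ⟨e⟩ := (@Ordinal.type_le_iff' _ _ _ _ isWellOrder_lt isWellOrder_lt).mp hord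
  have hemb : ∀ d d' : (Cardinal.aleph (α + 1)).ord.ToType, d < d' →
      ((e d : L) < (e d' : L) ∧ (e d : L) ≠ (e d' : L) ∧ (e d : L) ∈ H ∧ (e d' : L) ∈ H) := by
    intro d d' hdd
    have h1 : e d < e d' := e.map_rel_iff.mpr hdd
    exact ⟨h1, ne_of_lt h1, (e d).2, (e d').2⟩
  cases t with
  | true =>
    left
    refine ⟨fun d => g (e d : L), ?_⟩
    intro d d' hdd
    obtain ⟨h1, h2, h3, h4⟩ := hemb d d' hdd
    have := clr _ _ h3 h4 h2
    rw [hc] at this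
    exact (of_decide_eq_true this).mp h1
  | false =>
    right
    refine ⟨fun d => g (e d : L), ?_⟩
    intro d d' hdd
    obtain ⟨h1, h2, h3, h4⟩ := hemb d d' hdd
    have := clr _ _ h3 h4 h2
    rw [hc] at this
    have hniff := of_decide_eq_false this
    have hng : ¬ g (e d : L) < g (e d' : L) := fun hgg => hniff (iff_of_true h1 hgg)
    have hgne : g (e d : L) ≠ g (e d' : L) := fun hgg => h2 (g.injective hgg)
    exact lt_of_le_of_ne (not_lt.mp hng) hgne.symm
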